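/- Let (V, E, o, t, inv) be a finite connected multigraph and let x : E → ℝ^d be a 1-form such that the set of fluxes of x along all closed walks equals ℤ^d. Then every minimal form μ ∈ F(x) takes values in ℤ^d, the subgroup of ℝ^d generated by the set of values {μ(e) : e ∈ E} equals ℤ^d, and the set of fluxes of μ along all closed walks equals ℤ^d. (Paper: Theorem 2.1(i): the image of the minimal form μ generates the group ℤ^d and the image of its flux function satisfies Φ_μ(C) = ℤ^d; stated on the fundamental graph.) -/

import Mathlib

open scoped Classical
open Finset

noncomputable section

/-- The degree of a vertex: the number of oriented edges starting at it. -/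
def mdeg {V E : Type} [Fintype E] (o : E → V) (v : V) : ℕ :=
  (Finset.univ.filter fun e => o e = v).card

/-- The combinatorial magnetic Laplacian `Δ_α`. -/
def magLap {V E : Type} [Fintype E] (o t : E → V) (α : E → ℝ)
    (f : V → ℂ) (v : V) : ℂ :=
  ∑ e ∈ Finset.univ.filter (fun e => o e = v),
    (f v - Complex.exp (Complex.I * (α e : ℂ)) * f (t e))

/-- The fiber magnetic Laplacian `Δ_{m,φ}(θ)`. -/
def fiberLap {V E : Type} [Fintype E] {d : ℕ} (o t : E → V)
    (m : E → Fin d → ℝ) (φ : E → ℝ) (θ : Fin d → ℝ) (f : V → ℂ) (v : V) : ℂ :=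
  (mdeg o v : ℂ) * f v -
    ∑ e ∈ Finset.univ.filter (fun e => o e = v),
      Complex.exp (Complex.I * ((φ e + ∑ i, m e i * θ i : ℝ) : ℂ)) * f (t e)

/-- Standard inner product on `ℂ^V` (conjugate-linear in the first argument). -/
def dotC {V : Type} [Fintype V] (f g : V → ℂ) : ℂ :=
  ∑ v, (starRingEnd ℂ) (f v) * g v

/-- `lam` lists the eigenvalues of the operator `T` on `ℂ^V` in nondecreasing
order, counted with multiplicity (witnessed by an orthonormal eigenbasis). -/
def IsEigList {V : Type} [Fintype V] (T : (V → ℂ) → (V → ℂ))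
    (lam : Fin (Fintype.card V) → ℝ) : Prop :=
  Monotone lam ∧ ∃ u : Fin (Fintype.card V) → (V → ℂ),
    (∀ i j, dotC (u i) (u j) = if i = j then (1 : ℂ) else 0) ∧
    ∀ i, T (u i) = fun v => ((lam i : ℝ) : ℂ) * u i v

/-- A closed walk in the multigraph. -/
def IsClosedWalk {V E : Type} (o t : E → V) {k : ℕ} (c : Fin (k + 1) → E) : Prop :=
  (∀ i : Fin k, t (c i.castSucc) = o (c i.succ)) ∧ t (c (Fin.last k)) = o (c 0)

/-- Two forms have the same flux along every closed walk. -/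
def SameFlux {V E W : Type} [AddCommMonoid W] (o t : E → V) (b b' : E → W) : Prop :=
  ∀ (k : ℕ) (c : Fin (k + 1) → E), IsClosedWalk o t c →
    ∑ i, b (c i) = ∑ i, b' (c i)

/-- Connectivity of the multigraph: any two distinct vertices are the endpoints
of some walk. -/
def MGConnected {V E : Type} (o t : E → V) : Prop :=
  ∀ u v : V, u ≠ v → ∃ (k : ℕ) (c : Fin (k + 1) → E),
    (∀ i : Fin k, t (c i.castSucc) = o (c i.succ)) ∧ o (c 0) = u ∧ t (c (Fin.last k)) = v

/-- The set of fluxes of a form along all closed walks. -/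
def fluxSet {V E W : Type} [AddCommMonoid W] (o t : E → V) (b : E → W) : Set W :=
  {w | ∃ (k : ℕ) (c : Fin (k + 1) → E), IsClosedWalk o t c ∧ ∑ i, b (c i) = w}

/-- The number of oriented edges in the support of a form. -/
def suppCard {E : Type} [Fintype E] {W : Type} [Zero W] (b : E → W) : ℕ :=
  (Finset.univ.filter fun e => b e ≠ 0).card

/-- The integer lattice `ℤ^d` inside `ℝ^d`. -/
def intLattice (d : ℕ) : Set (Fin d → ℝ) :=
  {w | ∀ i, ∃ z : ℤ, w i = (z : ℝ)}

section AuxLemmas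

namespace MinFormAux

variable {V E : Type} {d : ℕ}

lemma lat_zero : (0 : Fin d → ℝ) ∈ intLattice d := fun _ => ⟨0, by simp⟩

lemma lat_add {a b : Fin d → ℝ} (ha : a ∈ intLattice d) (hb : b ∈ intLattice d) :
    a + b ∈ intLattice d := by
  intro i
  obtain ⟨z, hz⟩ := ha i
  obtain ⟨w, hw⟩ := hb i
  exact ⟨z + w, by simp [Pi.add_apply, hz, hw]⟩

lemma lat_neg {a : Fin d → ℝ} (ha : a ∈ intLattice d) : -a ∈ intLattice d := by
  intro i
  obtain ⟨z, hz⟩ := ha i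
  exact ⟨-z, by simp [Pi.neg_apply, hz]⟩

/-- Walk predicate on lists of edges. -/
def LW (o t : E → V) (l : List E) (u v : V) : Prop :=
  l ≠ [] ∧ l.IsChain (fun a b => t a = o b) ∧
    ∀ h : l ≠ [], o (l.head h) = u ∧ t (l.getLast h) = v

lemma LW_single (o t : E → V) (e : E) : LW o t [e] (o e) (t e) :=
  ⟨by simp, List.isChain_singleton e, fun _ => ⟨rfl, rfl⟩⟩

lemma LW_append {o t : E → V} {l₁ l₂ : List E} {u v w : V}
    (h₁ : LW o t l₁ u v) (h₂ : LW o t l₂ v w) : LW o t (l₁ ++ l₂) u w := by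
  obtain ⟨ne₁, ch₁, hp₁⟩ := h₁
  obtain ⟨ne₂, ch₂, hp₂⟩ := h₂
  have hne : l₁ ++ l₂ ≠ [] := by simp [ne₁]
  refine ⟨hne, ?_, ?_⟩
  · rw [List.isChain_append]
    refine ⟨ch₁, ch₂, ?_⟩
    intro a ha b hb
    rw [List.getLast?_eq_getLast ne₁] at ha
    rw [List.head?_eq_head ne₂] at hb
    simp only [Option.mem_def, Option.some_inj] at ha hb
    subst ha; subst hb
    rw [(hp₁ ne₁).2, (hp₂ ne₂).1]
  · intro _
    constructor
    · rw [List.head_append_left ne₁]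
      exact (hp₁ ne₁).1
    · rw [List.getLast_append_of_ne_nil _ ne₂]
      exact (hp₂ ne₂).2

lemma LW_rev {o t : E → V} (inv : E → E) (hoi : ∀ e, o (inv e) = t e)
    (hti : ∀ e, t (inv e) = o e) {l : List E} {u v : V} (h : LW o t l u v) :
    LW o t ((l.map inv).reverse) v u := by
  obtain ⟨ne, ch, hp⟩ := h
  have hner : (l.map inv).reverse ≠ [] := by simp [ne]
  refine ⟨hner, ?_, ?_⟩
  · rw [List.isChain_reverse, List.isChain_map]
    refine List.IsChain.imp ?_ ch
    intro a b hab
    show t (inv b) = o (inv a)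
    rw [hti, hoi, hab]
  · intro _
    constructor
    · rw [List.head_reverse, List.getLast_map, hoi]
      exact (hp ne).2
    · rw [List.getLast_reverse, List.head_map, hti]
      exact (hp ne).1

lemma sum_map_neg {W : Type} [AddCommGroup W] (f g : E → W) (hfg : ∀ e, g e = - f e) :
    ∀ l : List E, (l.map g).sum = -((l.map f).sum)
  | [] => by simp
  | e :: l => by
      simp only [List.map_cons, List.sum_cons, sum_map_neg f g hfg l, hfg e]
      abel

lemma sum_rev {W : Type} [AddCommGroup W] (inv : E → E) (μ : E → W)
    (hμ : ∀ e, μ (inv e) = -μ e) (l : List E) :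
    (((l.map inv).reverse).map μ).sum = -((l.map μ).sum) := by
  rw [List.map_reverse, List.sum_reverse, List.map_map]
  exact sum_map_neg μ (μ ∘ inv) (fun e => hμ e) l

lemma LW_ofFn {o t : E → V} {k : ℕ} {c : Fin (k + 1) → E}
    (hch : ∀ i : Fin k, t (c i.castSucc) = o (c i.succ)) :
    LW o t (List.ofFn c) (o (c 0)) (t (c (Fin.last k))) := by
  have hlen : (List.ofFn c).length = k + 1 := List.length_ofFn
  have hne : List.ofFn c ≠ [] := by
    intro h
    rw [h] at hlen
    simp at hlen
  refine ⟨hne, ?_, ?_⟩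
  · rw [List.isChain_iff_getElem]
    intro i hi
    rw [List.getElem_ofFn, List.getElem_ofFn]
    have hik : i < k := by
      rw [hlen] at hi
      omega
    exact hch ⟨i, hik⟩
  · intro _
    constructor
    · show o ((List.ofFn c).head hne) = o (c 0)
      have h0 : (List.ofFn c).head hne = c 0 := by
        rw [List.head_eq_getElem_zero, List.getElem_ofFn]
        exact congrArg c (by ext; simp)
      rw [h0]
    · show t ((List.ofFn c).getLast hne) = t (c (Fin.last k))
      congr 1
      rw [List.getLast_eq_getElem, List.getElem_ofFn]
      congr 1
      ext
      simp [hlen]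

lemma suppCard_lt {E : Type} [Fintype E] {W : Type} [Zero W] {b μ : E → W}
    (hsub : ∀ e, b e ≠ 0 → μ e ≠ 0) (e₀ : E) (h1 : μ e₀ ≠ 0) (h2 : b e₀ = 0) :
    suppCard b < suppCard μ := by
  unfold suppCard
  apply Finset.card_lt_card
  rw [Finset.ssubset_iff_of_subset]
  · exact ⟨e₀, by simp [h1], by simp [h2]⟩
  · intro e he
    simp only [Finset.mem_filter, Finset.mem_univ, true_and] at he ⊢
    exact hsub e he

end MinFormAux

end AuxLemmas
theorem minimal_form_integer_values
    {V E : Type} [Fintype V] [Fintype E] [Nonempty V] {d : ℕ}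
    (o t : E → V) (inv : E → E)
    (hfp : ∀ e, inv e ≠ e) (hinv : ∀ e, inv (inv e) = e)
    (hoi : ∀ e, o (inv e) = t e) (hti : ∀ e, t (inv e) = o e)
    (hconn : MGConnected o t)
    (x : E → Fin d → ℝ) (hx : ∀ e, x (inv e) = - x e)
    (hflux : fluxSet o t x = intLattice d) :
    ∀ μ : E → Fin d → ℝ, (∀ e, μ (inv e) = - μ e) → SameFlux o t x μ →
      (∀ b : E → Fin d → ℝ, (∀ e, b (inv e) = - b e) → SameFlux o t x b →
        suppCard μ ≤ suppCard b) →
      (∀ e i, ∃ z : ℤ, μ e i = (z : ℝ)) ∧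
      (AddSubgroup.closure (Set.range μ) : Set (Fin d → ℝ)) = intLattice d ∧
      fluxSet o t μ = intLattice d := by
  intro μ hμinv hSF hmin
  open MinFormAux in
  -- Step A : every flux of μ along a closed walk is integral
  have hA : ∀ (k : ℕ) (c : Fin (k + 1) → E), IsClosedWalk o t c →
      (∑ i, μ (c i)) ∈ intLattice d := by
    intro k c hc
    have h1 : (∑ i, x (c i)) ∈ fluxSet o t x := ⟨k, c, hc, rfl⟩
    rw [hflux] at h1
    rwa [hSF k c hc] at h1
  -- list version
  have hAL : ∀ (l : List E) (u : V), MinFormAux.LW o t l u u →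
      (l.map μ).sum ∈ intLattice d := by
    intro l u hlw
    obtain ⟨hne, hch, hp⟩ := hlw
    obtain ⟨hhead, hlast⟩ := hp hne
    set k := l.length - 1 with hk
    have hlen : l.length = k + 1 := by
      have := List.length_pos_iff.mpr hne
      omega
    set c : Fin (k + 1) → E := fun i => l.get (Fin.cast hlen.symm i) with hc
    have hchain : ∀ i : Fin k, t (c i.castSucc) = o (c i.succ) := by
      intro i
      have hlt : (i : ℕ) < l.length - 1 := by omega
      exact List.isChain_iff_getElem.mp hch i.val (by omega)
    have hclosed : IsClosedWalk o t c := by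
      refine ⟨hchain, ?_⟩
      have h1 : c (Fin.last k) = l.getLast hne := by
        rw [List.getLast_eq_getElem]
        rfl
      have h0 : c 0 = l.head hne := by
        rw [List.head_eq_getElem_zero]
        rfl
      rw [h1, h0, hlast, hhead]
    have hsum : ∑ i, μ (c i) = (l.map μ).sum := by
      have h2 : ∑ i, μ (c i) = ∑ j : Fin l.length, μ (l.get j) :=
        Fin.sum_congr' (fun j => μ (l.get j)) hlen.symm
      rw [h2]
      conv_rhs => rw [← List.ofFn_get l]
      rw [List.map_ofFn, List.sum_ofFn]
      rfl
    rw [← hsum]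
    exact hA k c hclosed
  -- potential G : V → ℝ^d realizing μ modulo the lattice
  obtain ⟨v₀⟩ := (inferInstance : Nonempty V)
  have hGex : ∀ v : V, ∃ g : Fin d → ℝ,
      (v = v₀ ∧ g = 0) ∨ ∃ l, MinFormAux.LW o t l v₀ v ∧ g = (l.map μ).sum := by
    intro v
    by_cases hv : v = v₀
    · exact ⟨0, Or.inl ⟨hv, rfl⟩⟩
    · obtain ⟨k, c, hch, h0, hlast⟩ := hconn v₀ v (Ne.symm hv)
      have hlw := MinFormAux.LW_ofFn hch
      rw [h0, hlast] at hlw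
      exact ⟨_, Or.inr ⟨_, hlw, rfl⟩⟩
  choose G hG using hGex
  have hEdge : ∀ e : E, μ e - (G (t e) - G (o e)) ∈ intLattice d := by
    intro e
    rcases hG (o e) with ⟨ho1, ho2⟩ | ⟨l₁, hl₁, ho2⟩ <;>
      rcases hG (t e) with ⟨ht1, ht2⟩ | ⟨l₂, hl₂, ht2⟩
    · -- loop at v₀
      have hlw : MinFormAux.LW o t [e] (o e) (o e) := by
        have := MinFormAux.LW_single o t e
        rwa [show t e = o e by rw [ho1, ht1]] at this
      have key := hAL [e] (o e) hlw
      simp only [List.map_cons, List.map_nil, List.sum_cons, List.sum_nil, add_zero] at key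
      have heq : μ e - (G (t e) - G (o e)) = μ e := by rw [ho2, ht2]; abel
      rwa [heq]
    · -- o e = v₀
      have hlw2 := MinFormAux.LW_rev inv hoi hti hl₂
      have hlw1 : MinFormAux.LW o t [e] v₀ (t e) := by
        have := MinFormAux.LW_single o t e
        rwa [ho1] at this
      have hlw := MinFormAux.LW_append hlw1 hlw2
      have key := hAL _ v₀ hlw
      rw [List.map_append, List.sum_append,
        MinFormAux.sum_rev inv μ hμinv l₂] at key
      simp only [List.map_cons, List.map_nil, List.sum_cons, List.sum_nil, add_zero] at key
      have heq : μ e - (G (t e) - G (o e)) = μ e + -(l₂.map μ).sum := by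
        rw [ho2, ht2]; abel
      rwa [heq]
    · -- t e = v₀
      have hlw1 : MinFormAux.LW o t [e] (o e) v₀ := by
        have := MinFormAux.LW_single o t e
        rwa [ht1] at this
      have hlw := MinFormAux.LW_append hl₁ hlw1
      have key := hAL _ v₀ hlw
      rw [List.map_append, List.sum_append] at key
      simp only [List.map_cons, List.map_nil, List.sum_cons, List.sum_nil, add_zero] at key
      have heq : μ e - (G (t e) - G (o e)) = (l₁.map μ).sum + μ e := by
        rw [ho2, ht2]; abel
      rwa [heq]
    · -- generic case
      have hlw2 := MinFormAux.LW_rev inv hoi hti hl₂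
      have hlw := MinFormAux.LW_append (MinFormAux.LW_append hl₁ (MinFormAux.LW_single o t e)) hlw2
      have key := hAL _ v₀ hlw
      rw [List.map_append, List.sum_append, List.map_append, List.sum_append,
        MinFormAux.sum_rev inv μ hμinv l₂] at key
      simp only [List.map_cons, List.map_nil, List.sum_cons, List.sum_nil, add_zero] at key
      have heq : μ e - (G (t e) - G (o e)) = (l₁.map μ).sum + μ e + -(l₂.map μ).sum := by
        rw [ho2, ht2]; abel
      rwa [heq]
  -- Part 1: integrality of μ
  have hInt : ∀ e i, ∃ z : ℤ, μ e i = (z : ℝ) := by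
    by_contra hni
    push_neg at hni
    obtain ⟨e₀, i₀, hi₀⟩ := hni
    set U : V → Prop := fun v => (G v - G (o e₀)) ∈ intLattice d with hU
    have hUo : U (o e₀) := by
      show G (o e₀) - G (o e₀) ∈ intLattice d
      rw [sub_self]
      exact MinFormAux.lat_zero
    have hUt : ¬ U (t e₀) := by
      intro hmem
      have h2 := MinFormAux.lat_add (hEdge e₀) hmem
      rw [sub_add_cancel] at h2
      obtain ⟨z, hz⟩ := h2 i₀
      exact hi₀ z hz
    set χ : E → ℝ := fun e => (if U (o e) then (1 : ℝ) else 0) - (if U (t e) then (1 : ℝ) else 0)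
      with hχ
    set b : E → Fin d → ℝ := fun e => μ e - χ e • μ e₀ with hb
    have hχinv : ∀ e, χ (inv e) = - χ e := by
      intro e
      simp only [hχ, hoi, hti]
      ring
    have hbinv : ∀ e, b (inv e) = - b e := by
      intro e
      simp only [hb, hμinv e, hχinv e]
      funext i
      simp only [Pi.sub_apply, Pi.neg_apply, Pi.smul_apply, smul_eq_mul]
      ring
    have hcross : ∀ e, χ e ≠ 0 → μ e ≠ 0 := by
      intro e hχe hμe
      apply hχe
      have hlat : G (t e) - G (o e) ∈ intLattice d := by
        have h3 := MinFormAux.lat_neg (hEdge e)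
        rw [hμe, zero_sub, neg_neg] at h3
        exact h3
      have hUiff : U (o e) ↔ U (t e) := by
        constructor
        · intro hh
          show G (t e) - G (o e₀) ∈ intLattice d
          have h4 : G (t e) - G (o e₀) = (G (t e) - G (o e)) + (G (o e) - G (o e₀)) := by abel
          rw [h4]
          exact MinFormAux.lat_add hlat hh
        · intro hh
          show G (o e) - G (o e₀) ∈ intLattice d
          have h4 : G (o e) - G (o e₀) = -(G (t e) - G (o e)) + (G (t e) - G (o e₀)) := by abel
          rw [h4]
          exact MinFormAux.lat_add (MinFormAux.lat_neg hlat) hh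
      by_cases h5 : U (o e) <;> simp [hχ, h5, hUiff.symm, hUiff.mp, (hUiff.not).mp] <;>
        simp_all [hUiff]
    have hbSF : SameFlux o t x b := by
      intro k c hc
      rw [hSF k c hc]
      have hcyc : ∀ i : Fin (k + 1), t (c i) = o (c (i + 1)) := by
        intro i
        by_cases h : i = Fin.last k
        · subst h
          have h6 : (Fin.last k) + 1 = 0 := by
            ext
            simp [Fin.add_def]
        
          rw [h6]
          exact hc.2
        · obtain ⟨j, rfl⟩ := (Fin.eq_castSucc_or_eq_last i).resolve_right h
          have h6 : j.castSucc + 1 = j.succ := by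
            ext
            have := j.isLt
            simp [Fin.add_def, Fin.castSucc, Nat.mod_eq_of_lt (by omega : (j : ℕ) + 1 < k + 1)]
          rw [h6]
          exact hc.1 j
      have htel : ∑ i, (if U (o (c i)) then (1 : ℝ) else 0)
          = ∑ i, (if U (t (c i)) then (1 : ℝ) else 0) := by
        have h7 := Equiv.sum_comp (Equiv.addRight (1 : Fin (k + 1)))
          (fun i => if U (o (c i)) then (1 : ℝ) else 0)
        rw [← h7]
        refine Finset.sum_congr rfl ?_
        intro i _
        rw [hcyc i]
        rfl
      have hχ0 : ∑ i, χ (c i) = 0 := by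
        simp only [hχ]
        rw [Finset.sum_sub_distrib, htel, sub_self]
      have h8 : ∑ i, b (c i) = ∑ i, μ (c i) - ∑ i, χ (c i) • μ e₀ :=
        Finset.sum_sub_distrib _ _
      have h9 : ∑ i, χ (c i) • μ e₀ = (∑ i, χ (c i)) • μ e₀ := (Finset.sum_smul).symm
      rw [h8, h9, hχ0, zero_smul, sub_zero]
    have hμe₀ : μ e₀ ≠ 0 := by
      intro h
      exact hi₀ 0 (by rw [h]; simp)
    have hbe₀ : b e₀ = 0 := by
      have hχe₀ : χ e₀ = 1 := by simp [hχ, hUo, hUt]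
      simp [hb, hχe₀]
    have hsub : ∀ e, b e ≠ 0 → μ e ≠ 0 := by
      intro e he hμe
      apply he
      by_cases hχe : χ e = 0
      · simp [hb, hχe, hμe]
      · exact absurd hμe (hcross e hχe)
    have hlt : suppCard b < suppCard μ := MinFormAux.suppCard_lt hsub e₀ hμe₀ hbe₀
    exact absurd (hmin b hbinv hbSF) (not_le.mpr hlt)
  refine ⟨hInt, ?_, ?_⟩
  · -- the subgroup generated by the values of μ is ℤ^d
    have hFSμ : fluxSet o t μ = intLattice d := by
      rw [← hflux]
      ext w
      constructor
      · rintro ⟨k, c, hc, rfl⟩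
        exact ⟨k, c, hc, hSF k c hc⟩
      · rintro ⟨k, c, hc, rfl⟩
        exact ⟨k, c, hc, (hSF k c hc).symm⟩
    apply Set.Subset.antisymm
    · -- closure ⊆ lattice
      have hl : AddSubgroup.closure (Set.range μ) ≤
          { carrier := intLattice d
            zero_mem' := MinFormAux.lat_zero
            add_mem' := fun ha hb => MinFormAux.lat_add ha hb
            neg_mem' := fun ha => MinFormAux.lat_neg ha } := by
        rw [AddSubgroup.closure_le]
        rintro w ⟨e, rfl⟩
        exact fun i => hInt e i
      exact hl
    · intro w hw
      rw [← hFSμ] at hw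
      obtain ⟨k, c, hc, rfl⟩ := hw
      exact AddSubgroup.sum_mem _ fun i _ =>
        AddSubgroup.subset_closure (Set.mem_range_self (c i))
  · rw [← hflux]
    ext w
    constructor
    · rintro ⟨k, c, hc, rfl⟩
      exact ⟨k, c, hc, hSF k c hc⟩
    · rintro ⟨k, c, hc, rfl⟩
      exact ⟨k, c, hc, (hSF k c hc).symm⟩
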